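/- Let H be a complete blow-up of C_5 with parts A, X, B, C, D (in cyclic order), possibly joined completely to additional independent sets X_1, ..., X_{r-2}. If |X| ≤ |A| and |X| ≤ |B| and |A|, |B| are the two smallest among {|A|,|B|,|C|,|D|,|X_1|,...,|X_{r-2}|} apart from |X|, then the minimum number of edges to remove to make the graph r-partite equals |X|·min(|A|,|B|). -/

import Mathlib

/-- The blow-up of a graph `H`. -/
def blowup {α : Type*} (H : SimpleGraph α) (m : α → ℕ) :
    SimpleGraph (Σ v : α, Fin (m v)) where
  Adj x y := H.Adj x.1 y.1
  symm := ⟨fun _ _ h => H.adj_symm h⟩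
  loopless := ⟨fun x h => H.irrefl h⟩

/-- The join `G ⊗ H` of two graphs. -/
def join {α β : Type*} (G : SimpleGraph α) (H : SimpleGraph β) :
    SimpleGraph (α ⊕ β) where
  Adj x y :=
    match x, y with
    | .inl a, .inl b => G.Adj a b
    | .inr a, .inr b => H.Adj a b
    | .inl _, .inr _ => True
    | .inr _, .inl _ => True
  symm := ⟨fun x y h => by cases x <;> cases y <;> simp_all [SimpleGraph.adj_comm]⟩
  loopless := ⟨fun x h => by cases x <;> simp_all⟩

/-- The 5-cycle on `ZMod 5`; in cyclic order the parts of its blow-up below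
are `X = 0, B = 1, C = 2, D = 3, A = 4`. -/
def C5 : SimpleGraph (ZMod 5) := SimpleGraph.fromRel (fun i j => i = j + 1)

/-- Minimum number of edges whose deletion makes `G` `r`-partite. -/
noncomputable def Dr {V : Type*} (G : SimpleGraph V) (r : ℕ) : ℕ :=
  sInf {c | ∃ S : Set (Sym2 V), S ⊆ G.edgeSet ∧ S.ncard = c ∧
    (G.deleteEdges S).Colorable r}

open Finset
set_option linter.unusedSectionVars false

section Aux
variable {P : Type*} {K : Type*} [Fintype P] [DecidableEq P] [Fintype K] [DecidableEq K]
variable (H : SimpleGraph P) [DecidableRel H.Adj]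

/-- Doubled cost of a fractional coloring of the parts. -/
def cost2 (n : P → K → ℕ) : ℕ :=
  ∑ p : P, ∑ q : P, if H.Adj p q then (∑ k : K, n p k * n q k) else 0

lemma cost2_decomp (n : P → K → ℕ) (p : P) :
    cost2 H n = 2 * (∑ q ∈ univ.erase p, if H.Adj p q then (∑ k : K, n p k * n q k) else 0)
      + ∑ q1 ∈ univ.erase p, ∑ q2 ∈ univ.erase p,
          (if H.Adj q1 q2 then (∑ k : K, n q1 k * n q2 k) else 0) := by
  classical
  have hsymm : ∀ q1 q2 : P, (if H.Adj q1 q2 then (∑ k : K, n q1 k * n q2 k) else 0)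
      = (if H.Adj q2 q1 then (∑ k : K, n q2 k * n q1 k) else 0) := by
    intro q1 q2
    congr 1
    · simp [SimpleGraph.adj_comm]
    · exact Finset.sum_congr rfl fun k _ => mul_comm _ _
  unfold cost2
  rw [← Finset.add_sum_erase _ _ (mem_univ p)]
  have h1 : (∑ q : P, if H.Adj p q then (∑ k : K, n p k * n q k) else 0)
      = ∑ q ∈ univ.erase p, if H.Adj p q then (∑ k : K, n p k * n q k) else 0 := by
    rw [← Finset.add_sum_erase _ _ (mem_univ p)]
    simp [H.irrefl]
  have h2 : ∀ q1 ∈ univ.erase p, (∑ q2 : P, if H.Adj q1 q2 then (∑ k : K, n q1 k * n q2 k) else 0)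
      = (if H.Adj p q1 then (∑ k : K, n p k * n q1 k) else 0)
        + ∑ q2 ∈ univ.erase p, (if H.Adj q1 q2 then (∑ k : K, n q1 k * n q2 k) else 0) := by
    intro q1 _
    rw [← Finset.add_sum_erase _ _ (mem_univ p), hsymm q1 p]
  rw [h1, Finset.sum_congr rfl h2, Finset.sum_add_distrib]
  ring

/-- One can always replace a fractional coloring by a "pure" one (each part
monochromatic) without increasing the cost. -/
lemma exists_pure (m : P → ℕ) [Nonempty K] :
    ∀ (F : Finset P) (n : P → K → ℕ), (∀ p, ∑ k, n p k = m p) →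
      (∀ p ∉ F, ∃ c : K, n p = fun k => if c = k then m p else 0) →
      ∃ χ : P → K, cost2 H (fun p k => if χ p = k then m p else 0) ≤ cost2 H n := by
  classical
  intro F
  induction F using Finset.induction_on with
  | empty =>
    intro n hrow hpure
    refine ⟨fun p => (hpure p (by simp)).choose, le_of_eq ?_⟩
    congr 1
    funext p
    exact ((hpure p (by simp)).choose_spec).symm
  | @insert p₀ F' hp₀ ih =>
    intro n hrow hpure
    set L : K → ℕ := fun k => ∑ q ∈ univ.erase p₀, (if H.Adj p₀ q then n q k else 0) with hL
    obtain ⟨k0, -, hk0⟩ := Finset.exists_min_image univ L univ_nonempty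
    set v : K → ℕ := fun k => if k0 = k then m p₀ else 0 with hv
    set n' : P → K → ℕ := Function.update n p₀ v with hn'
    have hrow' : ∀ p, ∑ k, n' p k = m p := by
      intro p
      by_cases hp : p = p₀
      · subst hp; simp [hn', hv, Finset.sum_ite_eq]
      · simp [hn', Function.update_of_ne hp, hrow]
    have hpure' : ∀ p ∉ F', ∃ c : K, n' p = fun k => if c = k then m p else 0 := by
      intro p hp
      by_cases hpp : p = p₀
      · subst hpp; exact ⟨k0, by simp [hn', hv]⟩
      · obtain ⟨c, hc⟩ := hpure p (by simp [hp, hpp])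
        exact ⟨c, by simp [hn', Function.update_of_ne hpp, hc]⟩
    obtain ⟨χ, hχ⟩ := ih n' hrow' hpure'
    refine ⟨χ, hχ.trans ?_⟩
    rw [cost2_decomp H n p₀, cost2_decomp H n' p₀]
    have hne : ∀ q ∈ univ.erase p₀, n' q = n q := by
      intro q hq
      exact Function.update_of_ne (Finset.ne_of_mem_erase hq) _ _
    have e2 : (∑ q1 ∈ univ.erase p₀, ∑ q2 ∈ univ.erase p₀,
          (if H.Adj q1 q2 then (∑ k : K, n' q1 k * n' q2 k) else 0))
        = ∑ q1 ∈ univ.erase p₀, ∑ q2 ∈ univ.erase p₀,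
          (if H.Adj q1 q2 then (∑ k : K, n q1 k * n q2 k) else 0) := by
      refine Finset.sum_congr rfl fun q1 h1 => Finset.sum_congr rfl fun q2 h2 => ?_
      rw [hne q1 h1, hne q2 h2]
    rw [e2]
    refine Nat.add_le_add_right (Nat.mul_le_mul_left 2 ?_) _
    have key : ∀ (w : P → K → ℕ),
        (∑ q ∈ univ.erase p₀, if H.Adj p₀ q then (∑ k : K, w p₀ k * n q k) else 0)
        = ∑ k : K, w p₀ k * L k := by
      intro w
      have step : ∀ q ∈ univ.erase p₀, (if H.Adj p₀ q then (∑ k : K, w p₀ k * n q k) else 0)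
          = ∑ k : K, w p₀ k * (if H.Adj p₀ q then n q k else 0) := by
        intro q _
        by_cases h : H.Adj p₀ q <;> simp [h]
      rw [Finset.sum_congr rfl step, Finset.sum_comm]
      refine Finset.sum_congr rfl fun k _ => ?_
      rw [hL, ← Finset.mul_sum]
    have e1 : (∑ q ∈ univ.erase p₀, if H.Adj p₀ q then (∑ k : K, n' p₀ k * n' q k) else 0)
        = ∑ q ∈ univ.erase p₀, if H.Adj p₀ q then (∑ k : K, n' p₀ k * n q k) else 0 :=
      Finset.sum_congr rfl fun q hq => by rw [hne q hq]
    rw [e1, key n, key n']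
    have hvv : n' p₀ = v := Function.update_self _ _ _
    calc ∑ k : K, n' p₀ k * L k = m p₀ * L k0 := by
          rw [hvv, hv]
          simp [Finset.sum_ite_eq, ite_mul]
      _ = (∑ k : K, n p₀ k) * L k0 := by rw [hrow]
      _ = ∑ k : K, n p₀ k * L k0 := by rw [Finset.sum_mul]
      _ ≤ ∑ k : K, n p₀ k * L k :=
          Finset.sum_le_sum fun k _ => Nat.mul_le_mul_left _ (hk0 k (mem_univ k))

/-- If every coloring of the parts has a monochromatic edge and every edge has
a large product of part sizes, the cost of any fractional coloring is large. -/
lemma cost2_lower (m : P → ℕ) [Nonempty K] (B : ℕ)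
    (hcol : ∀ χ : P → K, ∃ p q, H.Adj p q ∧ χ p = χ q)
    (hprod : ∀ p q, H.Adj p q → B ≤ m p * m q)
    (n : P → K → ℕ) (hrow : ∀ p, ∑ k, n p k = m p) :
    2 * B ≤ cost2 H n := by
  classical
  obtain ⟨χ, hχ⟩ := exists_pure H m Finset.univ n hrow (fun p hp => absurd (mem_univ p) hp)
  refine le_trans ?_ hχ
  obtain ⟨p₀, q₀, hadj, hmono⟩ := hcol χ
  have hne : p₀ ≠ q₀ := hadj.ne
  set N : P → K → ℕ := fun p k => if χ p = k then m p else 0 with hN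
  have hterm : ∀ p q : P, χ p = χ q → (∑ k : K, N p k * N q k) = m p * m q := by
    intro p q hpq
    have : ∀ k : K, N p k * N q k = if χ p = k then m p * m q else 0 := by
      intro k
      by_cases h : χ p = k <;> simp [hN, h, ← hpq]
    rw [Finset.sum_congr rfl (fun k _ => this k), Finset.sum_ite_eq]
    simp
  have expand : cost2 H N = ∑ x ∈ univ ×ˢ univ,
      (if H.Adj x.1 x.2 then (∑ k : K, N x.1 k * N x.2 k) else 0) := by
    rw [cost2, ← Finset.sum_product']
  rw [expand]
  have hsub : ({(p₀, q₀), (q₀, p₀)} : Finset (P × P)) ⊆ univ ×ˢ univ := by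
    intro x _; simp
  refine le_trans ?_ (Finset.sum_le_sum_of_subset hsub)
  rw [Finset.sum_pair (by simp [hne])]
  simp only [hadj, hadj.symm, if_true]
  rw [hterm p₀ q₀ hmono, hterm q₀ p₀ hmono.symm, mul_comm (m q₀)]
  have h := hprod p₀ q₀ hadj
  omega

/-- The graph of monochromatic edges of a blow-up. -/
def monoGraph (m : P → ℕ) (φ : (Σ p : P, Fin (m p)) → K) :
    SimpleGraph (Σ p : P, Fin (m p)) where
  Adj u v := (blowup H m).Adj u v ∧ φ u = φ v
  symm := ⟨fun _ _ h => ⟨(blowup H m).adj_symm h.1, h.2.symm⟩⟩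
  loopless := ⟨fun u h => (blowup H m).irrefl h.1⟩

instance (m : P → ℕ) (φ : (Σ p : P, Fin (m p)) → K) : DecidableRel (monoGraph H m φ).Adj :=
  fun u v => instDecidableAnd (dp := ‹DecidableRel H.Adj› u.1 v.1)

lemma count_rowsum (m : P → ℕ) (φ : (Σ p : P, Fin (m p)) → K) (p : P) :
    ∑ k : K, #(univ.filter fun i : Fin (m p) => φ ⟨p, i⟩ = k) = m p := by
  classical
  simp only [Finset.card_filter]
  rw [Finset.sum_comm]
  have : ∀ i : Fin (m p), (∑ k : K, if φ ⟨p, i⟩ = k then 1 else 0) = 1 := by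
    intro i; rw [Finset.sum_ite_eq]; simp
  rw [Finset.sum_congr rfl fun i _ => this i]
  simp

lemma count_eq (m : P → ℕ) (φ : (Σ p : P, Fin (m p)) → K) :
    2 * #(monoGraph H m φ).edgeFinset
      = cost2 H (fun p k => #(univ.filter fun i : Fin (m p) => φ ⟨p, i⟩ = k)) := by
  classical
  rw [← SimpleGraph.sum_degrees_eq_twice_card_edges]
  have hdeg : ∀ u, (monoGraph H m φ).degree u
      = ∑ v, if (monoGraph H m φ).Adj u v then 1 else 0 := by
    intro u
    rw [← SimpleGraph.card_neighborFinset_eq_degree, SimpleGraph.neighborFinset_eq_filter,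
      Finset.card_filter]
  rw [Finset.sum_congr rfl fun u _ => hdeg u]
  have hsig : ∀ f : (Σ p : P, Fin (m p)) → ℕ,
      (∑ u, f u) = ∑ p : P, ∑ i : Fin (m p), f ⟨p, i⟩ := by
    intro f
    rw [Finset.sum_sigma']
    rw [Finset.univ_sigma_univ]
  rw [hsig, cost2]
  refine Finset.sum_congr rfl fun p _ => ?_
  have step1 : ∀ i : Fin (m p), (∑ v, if (monoGraph H m φ).Adj ⟨p, i⟩ v then 1 else 0)
      = ∑ q : P, ∑ j : Fin (m q), if (monoGraph H m φ).Adj ⟨p, i⟩ ⟨q, j⟩ then 1 else 0 :=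
    fun i => hsig _
  rw [Finset.sum_congr rfl fun i _ => step1 i, Finset.sum_comm]
  refine Finset.sum_congr rfl fun q _ => ?_
  by_cases h : H.Adj p q
  · simp only [if_pos h]
    have hadj : ∀ (i : Fin (m p)) (j : Fin (m q)),
        (monoGraph H m φ).Adj ⟨p, i⟩ ⟨q, j⟩ ↔ φ ⟨p, i⟩ = φ ⟨q, j⟩ := by
      intro i j
      simp [monoGraph, blowup, h]
    have lhs_eq : (∑ i : Fin (m p), ∑ j : Fin (m q),
          if (monoGraph H m φ).Adj ⟨p, i⟩ ⟨q, j⟩ then 1 else 0)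
        = ∑ i : Fin (m p), #(univ.filter fun j : Fin (m q) => φ ⟨q, j⟩ = φ ⟨p, i⟩) := by
      refine Finset.sum_congr rfl fun i _ => ?_
      rw [Finset.card_filter]
      refine Finset.sum_congr rfl fun j _ => ?_
      by_cases hh : φ ⟨p, i⟩ = φ ⟨q, j⟩ <;> simp [hadj i j, hh, eq_comm]
    have rhs_eq : (∑ k : K, #(univ.filter fun i : Fin (m p) => φ ⟨p, i⟩ = k)
            * #(univ.filter fun j : Fin (m q) => φ ⟨q, j⟩ = k))
        = ∑ i : Fin (m p), #(univ.filter fun j : Fin (m q) => φ ⟨q, j⟩ = φ ⟨p, i⟩) := by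
      have e1 : ∀ k : K, #(univ.filter fun i : Fin (m p) => φ ⟨p, i⟩ = k)
            * #(univ.filter fun j : Fin (m q) => φ ⟨q, j⟩ = k)
          = ∑ i : Fin (m p), if φ ⟨p, i⟩ = k
              then #(univ.filter fun j : Fin (m q) => φ ⟨q, j⟩ = k) else 0 := by
        intro k
        rw [Finset.card_filter, Finset.sum_mul]
        refine Finset.sum_congr rfl fun i _ => ?_
        by_cases hh : φ ⟨p, i⟩ = k <;> simp [hh]
      rw [Finset.sum_congr rfl fun k _ => e1 k, Finset.sum_comm]
      refine Finset.sum_congr rfl fun i _ => ?_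
      rw [Finset.sum_ite_eq]
      simp
    rw [lhs_eq, rhs_eq]
  · simp only [if_neg h]
    have : ∀ (i : Fin (m p)) (j : Fin (m q)), ¬ (monoGraph H m φ).Adj ⟨p, i⟩ ⟨q, j⟩ :=
      fun i j hc => h hc.1
    simp [this]

end Aux

section Facts

lemma C5_adj (v u : ZMod 5) : C5.Adj v u ↔ v ≠ u ∧ (v = u + 1 ∨ u = v + 1) :=
  SimpleGraph.fromRel_adj _ v u

instance : DecidableRel C5.Adj := fun v u => decidable_of_iff' _ (C5_adj v u)

instance joinDecidable {α β : Type*} (G : SimpleGraph α) (H : SimpleGraph β)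
    [DecidableRel G.Adj] [DecidableRel H.Adj] : DecidableRel (join G H).Adj := fun x y =>
  match x, y with
  | .inl a, .inl b => inferInstanceAs (Decidable (G.Adj a b))
  | .inr a, .inr b => inferInstanceAs (Decidable (H.Adj a b))
  | .inl _, .inr _ => inferInstanceAs (Decidable True)
  | .inr _, .inl _ => inferInstanceAs (Decidable True)

variable {r : ℕ}

lemma join_adj_ll {i j : Fin (r-2)} :
    (join (⊤ : SimpleGraph (Fin (r - 2))) C5).Adj (.inl i) (.inl j) ↔ i ≠ j := Iff.rfl

lemma join_adj_lr {i : Fin (r-2)} {v : ZMod 5} :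
    (join (⊤ : SimpleGraph (Fin (r - 2))) C5).Adj (.inl i) (.inr v) := trivial

lemma join_adj_rr {v u : ZMod 5} :
    (join (⊤ : SimpleGraph (Fin (r - 2))) C5).Adj (.inr v) (.inr u) ↔ C5.Adj v u := Iff.rfl

/-- The part-graph has no proper `r`-coloring. -/
lemma no_coloring (hr : 2 ≤ r) (χ : Fin (r-2) ⊕ ZMod 5 → Fin r) :
    ∃ p q, (join (⊤ : SimpleGraph (Fin (r - 2))) C5).Adj p q ∧ χ p = χ q := by
  classical
  by_contra hcon
  push_neg at hcon
  set H := join (⊤ : SimpleGraph (Fin (r - 2))) C5 with hH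
  have hproper : ∀ p q, H.Adj p q → χ p ≠ χ q := hcon
  have hCadj : ∀ v : ZMod 5, C5.Adj v (v + 1) := by decide
  have hcyc : ∀ v : ZMod 5, χ (.inr v) ≠ χ (.inr (v+1)) :=
    fun v => hproper _ _ (join_adj_rr.mpr (hCadj v))
  set c : ZMod 5 → Fin r := fun v => χ (.inr v) with hc
  set Icy : Finset (Fin r) := Finset.image c univ with hIcy
  have h3 : 3 ≤ Icy.card := by
    by_contra hle
    push_neg at hle
    have hsub : ({c 0, c 1} : Finset (Fin r)) ⊆ Icy := by
      intro z hz
      simp only [Finset.mem_insert, Finset.mem_singleton] at hz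
      rcases hz with h | h <;> (subst h; exact Finset.mem_image_of_mem c (mem_univ _))
    have hcard2 : ({c 0, c 1} : Finset (Fin r)).card = 2 := by
      rw [Finset.card_insert_of_notMem (by simpa using hcyc 0), Finset.card_singleton]
    have heq : ({c 0, c 1} : Finset (Fin r)) = Icy :=
      Finset.eq_of_subset_of_card_le hsub (by omega)
    have hmem : ∀ v : ZMod 5, c v = c 0 ∨ c v = c 1 := by
      intro v
      have : c v ∈ Icy := Finset.mem_image_of_mem c (mem_univ _)
      rw [← heq] at this
      simpa using this
    have h01 : c 0 ≠ c 1 := hcyc 0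
    have h12 : c 1 ≠ c 2 := hcyc 1
    have h23 : c 2 ≠ c 3 := hcyc 2
    have h34 : c 3 ≠ c 4 := hcyc 3
    have h40 : c 4 ≠ c 0 := hcyc 4
    rcases hmem 2 with h2 | h2
    · rcases hmem 3 with h3 | h3
      · exact h23 (h2.trans h3.symm)
      · rcases hmem 4 with h4 | h4
        · exact h40 h4
        · exact h34 (h3.trans h4.symm)
    · exact h12 h2.symm
  set cex : Fin (r-2) → Fin r := fun i => χ (.inl i) with hcex
  have hinj : Function.Injective cex := by
    intro i j hij
    by_contra hne
    exact hproper _ _ (join_adj_ll.mpr hne) hij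
  set Iex : Finset (Fin r) := Finset.image cex univ with hIex
  have hexcard : Iex.card = r - 2 := by
    rw [hIex, Finset.card_image_of_injective _ hinj, Finset.card_univ, Fintype.card_fin]
  have hdisj : Disjoint Iex Icy := by
    rw [Finset.disjoint_left]
    intro z hzex hzcy
    obtain ⟨i, -, hi⟩ := Finset.mem_image.mp hzex
    obtain ⟨v, -, hv⟩ := Finset.mem_image.mp hzcy
    exact hproper _ _ (join_adj_lr (i := i) (v := v)) (hi.trans hv.symm)
  have hunion : (Iex ∪ Icy).card = Iex.card + Icy.card := Finset.card_union_of_disjoint hdisj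
  have hle : (Iex ∪ Icy).card ≤ r := by
    have := Finset.card_le_univ (Iex ∪ Icy)
    simpa using this
  omega

/-- Every edge of the part-graph has a large product of part sizes. -/
lemma prod_lower (r : ℕ) (m : Fin (r - 2) ⊕ ZMod 5 → ℕ)
    (hXA : m (.inr 0) ≤ m (.inr 4)) (hXB : m (.inr 0) ≤ m (.inr 1))
    (hA : ∀ i, m (.inr 4) ≤ m (.inl i)) (hAC : m (.inr 4) ≤ m (.inr 2))
    (hAD : m (.inr 4) ≤ m (.inr 3))
    (hB : ∀ i, m (.inr 1) ≤ m (.inl i)) (hBC : m (.inr 1) ≤ m (.inr 2))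
    (hBD : m (.inr 1) ≤ m (.inr 3)) :
    ∀ p q, (join (⊤ : SimpleGraph (Fin (r - 2))) C5).Adj p q →
      m (.inr 0) * min (m (.inr 4)) (m (.inr 1)) ≤ m p * m q := by
  have hx : ∀ p, m (.inr 0) ≤ m p := by
    rintro (i | v)
    · exact hXA.trans (hA i)
    · fin_cases v
      · exact le_rfl
      · exact hXB
      · exact hXA.trans hAC
      · exact hXA.trans hAD
      · exact hXA
  have ht : ∀ p, p ≠ Sum.inr 0 → min (m (.inr 4)) (m (.inr 1)) ≤ m p := by
    rintro (i | v) hp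
    · exact (min_le_left _ _).trans (hA i)
    · fin_cases v
      · exact absurd rfl hp
      · exact min_le_right _ _
      · exact (min_le_left _ _).trans hAC
      · exact (min_le_left _ _).trans hAD
      · exact min_le_left _ _
  intro p q hadj
  by_cases hp : p = Sum.inr 0
  · subst hp
    exact Nat.mul_le_mul le_rfl (ht q fun h => hadj.ne h.symm)
  · rw [mul_comm]
    exact Nat.mul_le_mul (ht p hp) (hx q)

/-- Construction of a good edge-deletion set. -/
lemma upper_bound (r : ℕ) (hr : 2 ≤ r) (m : Fin (r - 2) ⊕ ZMod 5 → ℕ)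
    (w : ZMod 5) (hw0 : w ≠ 0) (hadj0w : C5.Adj 0 w) (cl : ZMod 5 → Bool)
    (hcl : ∀ v u : ZMod 5, C5.Adj v u → cl v = cl u → (v = 0 ∧ u = w) ∨ (v = w ∧ u = 0)) :
    ∃ S : Set (Sym2 (Σ v : Fin (r - 2) ⊕ ZMod 5, Fin (m v))),
      S ⊆ (blowup (join (⊤ : SimpleGraph (Fin (r - 2))) C5) m).edgeSet ∧
      S.ncard = m (.inr 0) * m (.inr w) ∧
      ((blowup (join (⊤ : SimpleGraph (Fin (r - 2))) C5) m).deleteEdges S).Colorable r := by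
  classical
  set G := blowup (join (⊤ : SimpleGraph (Fin (r - 2))) C5) m with hG
  set f : Fin (m (.inr 0)) × Fin (m (.inr w)) → Sym2 (Σ v : Fin (r - 2) ⊕ ZMod 5, Fin (m v)) :=
    fun x => s(⟨.inr 0, x.1⟩, ⟨.inr w, x.2⟩) with hf
  have hfinj : Function.Injective f := by
    rintro ⟨i, j⟩ ⟨i', j'⟩ h
    simp only [hf, Sym2.eq_iff] at h
    rcases h with ⟨h1, h2⟩ | ⟨h1, h2⟩
    · obtain ⟨-, hi⟩ := Sigma.mk.inj_iff.mp h1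
      obtain ⟨-, hj⟩ := Sigma.mk.inj_iff.mp h2
      exact Prod.ext (eq_of_heq hi) (eq_of_heq hj)
    · obtain ⟨hbad, -⟩ := Sigma.mk.inj_iff.mp h1
      exact absurd (Sum.inr.inj hbad).symm hw0
  refine ⟨Set.range f, ?_, ?_, ?_⟩
  · rintro e ⟨⟨i, j⟩, rfl⟩
    exact hadj0w
  · have : Set.range f = ↑(Finset.image f univ) := by
      rw [Finset.coe_image, Finset.coe_univ, Set.image_univ]
    rw [this, Set.ncard_coe_finset, Finset.card_image_of_injective _ hfinj, Finset.card_univ,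
      Fintype.card_prod, Fintype.card_fin, Fintype.card_fin]
  · have hr2 : r - 2 < r := by omega
    have hr1 : r - 1 < r := by omega
    set φ : (Σ v : Fin (r - 2) ⊕ ZMod 5, Fin (m v)) → Fin r := fun u =>
      match u with
      | ⟨.inl i, _⟩ => ⟨i.1, lt_of_lt_of_le i.2 (by omega)⟩
      | ⟨.inr v, _⟩ => if cl v then ⟨r - 2, hr2⟩ else ⟨r - 1, hr1⟩ with hφ
    refine ⟨SimpleGraph.Coloring.mk φ ?_⟩
    rintro ⟨p, i⟩ ⟨q, j⟩ hadj
    rw [SimpleGraph.deleteEdges_adj] at hadj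
    obtain ⟨hGadj, hnS⟩ := hadj
    rcases p with a | v <;> rcases q with b | u
    · have hab : a ≠ b := hGadj
      simp only [hφ]
      intro hc
      simp only [Fin.mk.injEq] at hc
      exact hab (Fin.ext hc)
    · simp only [hφ]
      intro hc
      have ha2 : a.1 < r - 2 := a.2
      by_cases hclu : cl u <;> simp [hclu, Fin.mk.injEq] at hc <;> omega
    · simp only [hφ]
      intro hc
      have hb2 : b.1 < r - 2 := b.2
      by_cases hclv : cl v <;> simp [hclv, Fin.mk.injEq] at hc <;> omega
    · have hvu : C5.Adj v u := hGadj
      simp only [hφ]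
      intro hc
      have hclvu : cl v = cl u := by
        by_cases h1 : cl v <;> by_cases h2 : cl u <;>
          simp [h1, h2, Fin.mk.injEq] at hc ⊢ <;> omega
      rcases hcl v u hvu hclvu with ⟨hv, hu⟩ | ⟨hv, hu⟩
      · subst hv; subst hu
        exact hnS ⟨(i, j), rfl⟩
      · subst hv; subst hu
        refine hnS ⟨(j, i), ?_⟩
        simp only [hf]
        rw [Sym2.eq_swap]

/-- Any valid deletion set has at least `|X| · min(|A|,|B|)` edges. -/
lemma lower_bound (r : ℕ) (hr : 2 ≤ r) (m : Fin (r - 2) ⊕ ZMod 5 → ℕ)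
    (hXA : m (.inr 0) ≤ m (.inr 4)) (hXB : m (.inr 0) ≤ m (.inr 1))
    (hA : ∀ i, m (.inr 4) ≤ m (.inl i)) (hAC : m (.inr 4) ≤ m (.inr 2))
    (hAD : m (.inr 4) ≤ m (.inr 3))
    (hB : ∀ i, m (.inr 1) ≤ m (.inl i)) (hBC : m (.inr 1) ≤ m (.inr 2))
    (hBD : m (.inr 1) ≤ m (.inr 3)) :
    ∀ c ∈ {c | ∃ S : Set (Sym2 (Σ v : Fin (r - 2) ⊕ ZMod 5, Fin (m v))),
        S ⊆ (blowup (join (⊤ : SimpleGraph (Fin (r - 2))) C5) m).edgeSet ∧ S.ncard = c ∧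
        ((blowup (join (⊤ : SimpleGraph (Fin (r - 2))) C5) m).deleteEdges S).Colorable r},
      m (.inr 0) * min (m (.inr 4)) (m (.inr 1)) ≤ c := by
  classical
  haveI : Nonempty (Fin r) := ⟨⟨0, by omega⟩⟩
  rintro c ⟨S, hSsub, hScard, hScol⟩
  obtain ⟨φ⟩ := hScol
  set H := join (⊤ : SimpleGraph (Fin (r - 2))) C5 with hH
  have key := cost2_lower H m (m (.inr 0) * min (m (.inr 4)) (m (.inr 1)))
      (no_coloring hr) (prod_lower r m hXA hXB hA hAC hAD hB hBC hBD)
      (fun p k => #(univ.filter fun i : Fin (m p) => φ ⟨p, i⟩ = k))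
      (count_rowsum m ⇑φ)
  rw [← count_eq H m ⇑φ] at key
  have hTS : ↑(monoGraph H m ⇑φ).edgeFinset ⊆ S := by
    intro e he
    rw [Finset.mem_coe, SimpleGraph.mem_edgeFinset] at he
    induction e using Sym2.ind with
    | _ u v =>
      rw [SimpleGraph.mem_edgeSet] at he
      obtain ⟨hGadj, hmono⟩ := he
      by_contra hnS
      exact φ.valid (SimpleGraph.deleteEdges_adj.mpr ⟨hGadj, hnS⟩) hmono
  have hcard : #(monoGraph H m ⇑φ).edgeFinset ≤ c := by
    rw [← hScard, ← Set.ncard_coe_finset]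
    exact Set.ncard_le_ncard hTS (Set.toFinite S)
  omega

end Facts

/-- For a complete blow-up of `C_5` (parts `A, X, B, C, D` in cyclic order)
joined to `r-2` further independent sets, if `|X|` is smallest and `|A|, |B|`
are the next two smallest part sizes, then exactly `|X|·min(|A|,|B|)` edges
must be deleted to make the graph `r`-partite. -/
theorem stmt11 (r : ℕ) (hr : 2 ≤ r)
    (m : Fin (r - 2) ⊕ ZMod 5 → ℕ)
    (hXA : m (.inr 0) ≤ m (.inr 4)) (hXB : m (.inr 0) ≤ m (.inr 1))
    (hA : ∀ i, m (.inr 4) ≤ m (.inl i)) (hAC : m (.inr 4) ≤ m (.inr 2))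
    (hAD : m (.inr 4) ≤ m (.inr 3))
    (hB : ∀ i, m (.inr 1) ≤ m (.inl i)) (hBC : m (.inr 1) ≤ m (.inr 2))
    (hBD : m (.inr 1) ≤ m (.inr 3)) :
    Dr (blowup (join (⊤ : SimpleGraph (Fin (r - 2))) C5) m) r =
      m (.inr 0) * min (m (.inr 4)) (m (.inr 1)) := by
  have hlow := lower_bound r hr m hXA hXB hA hAC hAD hB hBC hBD
  apply le_antisymm
  · rcases le_total (m (.inr 4)) (m (.inr 1)) with hab | hab
    · obtain ⟨S, hS1, hS2, hS3⟩ := upper_bound r hr m 4 (by decide) (by decide)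
        (fun v => decide (v = 0 ∨ v = 4 ∨ v = 2)) (by decide)
      rw [min_eq_left hab]
      exact Nat.sInf_le ⟨S, hS1, hS2, hS3⟩
    · obtain ⟨S, hS1, hS2, hS3⟩ := upper_bound r hr m 1 (by decide) (by decide)
        (fun v => decide (v = 0 ∨ v = 1 ∨ v = 3)) (by decide)
      rw [min_eq_right hab]
      exact Nat.sInf_le ⟨S, hS1, hS2, hS3⟩
  · obtain ⟨S, hS1, hS2, hS3⟩ := upper_bound r hr m 4 (by decide) (by decide)
      (fun v => decide (v = 0 ∨ v = 4 ∨ v = 2)) (by decide)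
    exact le_csInf ⟨_, S, hS1, hS2, hS3⟩ hlow
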